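/- Let s, t, k be positive integers with s/2 < k ≤ s, q = |Σ|. Let A_k ⊆ Σ^{s+k} be the set of strings x for which some y with d_H(x,y) ≤ t satisfies y_{[s]} = y_{k+[s]}. Then |A_k| ≤ q^k · ∑_{i=0}^{t} C(2s−k, i)·(q−1)^i. -/

import Mathlib

open scoped Classical

open Finset


lemma fiber_card_le {ι : Type*} [Fintype ι] [DecidableEq ι] {S : Type*} [Fintype S]
    [DecidableEq S] (c : ι → S) (A : Finset ι) :
    (Finset.univ.filter fun w : ι → S =>
      (Finset.univ.filter fun j => w j ≠ c j) = A).card ≤ (Fintype.card S - 1) ^ A.card := by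
  classical
  have htarget : (Finset.univ.filter fun f : {a // a ∈ A} → S => ∀ a, f a ≠ c a.1).card
      = (Fintype.card S - 1) ^ A.card := by
    have h0 : (Finset.univ.filter fun f : {a // a ∈ A} → S => ∀ a, f a ≠ c a.1).card
        = Fintype.card {f : {a // a ∈ A} → S // ∀ a, f a ≠ c a.1} :=
      (Fintype.card_subtype _).symm
    have e : {f : {a // a ∈ A} → S // ∀ a, f a ≠ c a.1}
        ≃ ∀ a : {a // a ∈ A}, {x : S // x ≠ c a.1} :=
      Equiv.subtypePiEquivPi (p := fun (a : {a // a ∈ A}) (x : S) => x ≠ c a.1)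
    rw [h0, Fintype.card_congr e, Fintype.card_pi]
    have h1 : ∀ a : {a // a ∈ A}, Fintype.card {x : S // x ≠ c a.1} = Fintype.card S - 1 := by
      intro a
      rw [Fintype.card_subtype_compl (p := fun x => x = c a.1), Fintype.card_subtype_eq]
    simp only [h1, Finset.prod_const, Finset.card_univ, Fintype.card_coe]
  rw [← htarget]
  apply Finset.card_le_card_of_injOn (fun w => fun a => w a.1)
  · intro w hw
    simp only [Finset.mem_coe, Finset.mem_filter, Finset.mem_univ, true_and] at hw ⊢
    intro a
    have h2 : a.1 ∈ Finset.univ.filter fun j => w j ≠ c j := by rw [hw]; exact a.2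
    exact (Finset.mem_filter.mp h2).2
  · intro w1 h1 w2 h2 h
    simp only [Finset.coe_filter, Set.mem_setOf_eq, Finset.mem_univ, true_and] at h1 h2
    funext i
    by_cases hi : i ∈ A
    · exact congrFun h ⟨i, hi⟩
    · have e1 : w1 i = c i := by
        by_contra hne
        exact hi (h1 ▸ Finset.mem_filter.mpr ⟨Finset.mem_univ _, hne⟩)
      have e2 : w2 i = c i := by
        by_contra hne
        exact hi (h2 ▸ Finset.mem_filter.mpr ⟨Finset.mem_univ _, hne⟩)
      rw [e1, e2]

lemma ball_card_le {ι : Type*} [Fintype ι] [DecidableEq ι] {S : Type*} [Fintype S]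
    [DecidableEq S] (c : ι → S) (t : ℕ) :
    (Finset.univ.filter fun w : ι → S => hammingDist w c ≤ t).card ≤
      ∑ i ∈ Finset.range (t + 1), (Fintype.card ι).choose i * (Fintype.card S - 1) ^ i := by
  classical
  have hsub : (Finset.univ.filter fun w : ι → S => hammingDist w c ≤ t) ⊆
      (Finset.range (t + 1)).biUnion (fun i =>
        Finset.univ.filter fun w : ι → S => hammingDist w c = i) := by
    intro w hw
    simp only [Finset.mem_filter, Finset.mem_univ, true_and] at hw
    exact Finset.mem_biUnion.mpr ⟨hammingDist w c, Finset.mem_range.mpr (by omega),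
      Finset.mem_filter.mpr ⟨Finset.mem_univ _, rfl⟩⟩
  refine le_trans (Finset.card_le_card hsub) (le_trans (Finset.card_biUnion_le) ?_)
  apply Finset.sum_le_sum
  intro i _
  -- sphere bound
  have hsub2 : (Finset.univ.filter fun w : ι → S => hammingDist w c = i) ⊆
      (Finset.univ.powersetCard i).biUnion (fun A =>
        Finset.univ.filter fun w : ι → S => (Finset.univ.filter fun j => w j ≠ c j) = A) := by
    intro w hw
    simp only [Finset.mem_filter, Finset.mem_univ, true_and] at hw
    refine Finset.mem_biUnion.mpr ⟨Finset.univ.filter fun j => w j ≠ c j, ?_, ?_⟩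
    · exact Finset.mem_powersetCard.mpr ⟨Finset.subset_univ _, hw⟩
    · exact Finset.mem_filter.mpr ⟨Finset.mem_univ _, rfl⟩
  refine le_trans (Finset.card_le_card hsub2) (le_trans (Finset.card_biUnion_le) ?_)
  calc ∑ A ∈ Finset.univ.powersetCard i,
        (Finset.univ.filter fun w : ι → S =>
          (Finset.univ.filter fun j => w j ≠ c j) = A).card
      ≤ ∑ A ∈ Finset.univ.powersetCard i, (Fintype.card S - 1) ^ i := by
        apply Finset.sum_le_sum
        intro A hA
        have := fiber_card_le c A
        rwa [(Finset.mem_powersetCard.mp hA).2] at this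
    _ = (Fintype.card ι).choose i * (Fintype.card S - 1) ^ i := by
        rw [Finset.sum_const, Finset.card_powersetCard, Finset.card_univ, smul_eq_mul]

section Main
variable {S : Type*} [Fintype S] [DecidableEq S]

/-- The periodic modification `y'` of `y` that copies `x` on the middle block. -/
def yp (s k : ℕ) (hk0 : 0 < k) (x y : Fin (s + k) → S) : Fin (s + k) → S :=
  fun i => if s - k ≤ i.1 % k
    then x ⟨i.1 % k, lt_of_lt_of_le (Nat.mod_lt _ hk0) (Nat.le_add_left k s)⟩
    else y ⟨i.1 % k, lt_of_lt_of_le (Nat.mod_lt _ hk0) (Nat.le_add_left k s)⟩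

lemma yp_period (s k : ℕ) (hk0 : 0 < k) (x y : Fin (s + k) → S) (i : Fin (s + k)) :
    yp s k hk0 x y i = yp s k hk0 x y
      ⟨i.1 % k, lt_of_lt_of_le (Nat.mod_lt _ hk0) (Nat.le_add_left k s)⟩ := by
  have h : i.1 % k % k = i.1 % k := Nat.mod_eq_of_lt (Nat.mod_lt _ hk0)
  simp only [yp, h]

lemma yp_eq_x (s k : ℕ) (hk0 : 0 < k) (x y : Fin (s + k) → S) (i : Fin (s + k))
    (h1 : s - k ≤ i.1) (h2 : i.1 < k) : yp s k hk0 x y i = x i := by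
  have h : i.1 % k = i.1 := Nat.mod_eq_of_lt h2
  simp only [yp, h, if_pos h1]

lemma y_period {s k : ℕ} (hk0 : 0 < k) (hk : k ≤ s) {y : Fin (s + k) → S}
    (hper : ∀ i, (hi : i < s) → y ⟨i, by omega⟩ = y ⟨k + i, by omega⟩) :
    ∀ m (h : m < s + k), y ⟨m, h⟩ = y ⟨m % k,
      lt_of_lt_of_le (Nat.mod_lt _ hk0) (Nat.le_add_left k s)⟩ := by
  intro m
  induction m using Nat.strong_induction_on with
  | _ m ih =>
    intro h
    by_cases hm : m < k
    · exact congrArg y (Fin.ext (Nat.mod_eq_of_lt hm).symm)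
    · push_neg at hm
      have h1 : m - k < s := by omega
      have h2 := hper (m - k) h1
      have h3 : k + (m - k) = m := by omega
      have h4 : m % k = (m - k) % k := (Nat.mod_eq_sub_mod hm)
      calc y ⟨m, h⟩ = y ⟨k + (m - k), by omega⟩ := congrArg y (Fin.ext h3.symm)
        _ = y ⟨m - k, by omega⟩ := h2.symm
        _ = y ⟨(m - k) % k, _⟩ := ih (m - k) (by omega) (by omega)
        _ = y ⟨m % k, _⟩ := congrArg y (Fin.ext h4.symm)

end Main

section Core
variable {S : Type*} [Fintype S] [DecidableEq S]

set_option linter.unusedSectionVars false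

/-- Core distance bound: `x` restricted to the positions outside the middle block
is within distance `t` of `y'` restricted there. -/
lemma core_bound {s t k : ℕ} (hs : 0 < s) (hk0 : 0 < k) (hk : k ≤ s) (hk2 : s < 2 * k)
    (x y : Fin (s + k) → S) (hd : hammingDist x y ≤ t)
    (hper : ∀ i, (hi : i < s) → y ⟨i, by omega⟩ = y ⟨k + i, by omega⟩) :
    hammingDist (fun j : {i : Fin (s + k) // i.1 < s - k ∨ k ≤ i.1} => x j.1)
      (fun j => yp s k hk0 x y j.1) ≤ t := by
  classical
  have key : ∀ j : {i : Fin (s + k) // i.1 < s - k ∨ k ≤ i.1},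
      x j.1 ≠ yp s k hk0 x y j.1 → x j.1 = y j.1 →
      s ≤ j.1.1 ∧ j.1.1 < 2 * k ∧
        x ⟨j.1.1 - k, by omega⟩ ≠ y ⟨j.1.1 - k, by omega⟩ := by
    intro j hne heq
    have hyper := y_period hk0 hk hper j.1.1 j.1.2
    by_cases hc : s - k ≤ j.1.1 % k
    · have hik : k ≤ j.1.1 := by
        rcases j.2 with h | h
        · exfalso
          have : j.1.1 % k = j.1.1 := Nat.mod_eq_of_lt (by omega)
          omega
        · exact h
      have hlt2 : j.1.1 < 2 * k := by
        by_contra hge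
        push_neg at hge
        have e1 : j.1.1 % k = (j.1.1 - k) % k := Nat.mod_eq_sub_mod hik
        have e2 : (j.1.1 - k) % k = (j.1.1 - 2 * k) % k := by
          rw [Nat.mod_eq_sub_mod (by omega)]
          congr 1
          omega
        have e3 : (j.1.1 - 2 * k) % k = j.1.1 - 2 * k := Nat.mod_eq_of_lt (by omega)
        have hj := j.1.2
        omega
      have emod : j.1.1 % k = j.1.1 - k := by
        rw [Nat.mod_eq_sub_mod hik]
        exact Nat.mod_eq_of_lt (by omega)
      refine ⟨by omega, hlt2, ?_⟩
      have hypx : yp s k hk0 x y j.1 = x ⟨j.1.1 - k, by omega⟩ := by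
        simp only [yp, if_pos hc]
        exact congrArg x (Fin.ext emod)
      have hy2 : y j.1 = y ⟨j.1.1 - k, by omega⟩ := by
        rw [hyper]
        exact congrArg y (Fin.ext emod)
      intro hxy
      apply hne
      rw [hypx, heq, hy2, ← hxy]
    · exfalso
      apply hne
      have h0 : yp s k hk0 x y j.1 = y ⟨j.1.1 % k,
          lt_of_lt_of_le (Nat.mod_lt _ hk0) (Nat.le_add_left k s)⟩ := by
        simp only [yp, if_neg hc]
      rw [h0, ← hyper, heq]
  rw [hammingDist] at hd ⊢
  refine le_trans (Finset.card_le_card_of_injOn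
    (fun j => if x j.1 = y j.1 then (⟨j.1.1 - k, by omega⟩ : Fin (s + k)) else j.1) ?_ ?_) hd
  · intro j hj
    simp only [Finset.mem_coe, Finset.mem_filter, Finset.mem_univ, true_and] at hj ⊢
    by_cases hc : x j.1 = y j.1
    · rw [if_pos hc]
      exact (key j hj hc).2.2
    · rw [if_neg hc]
      exact hc
  · intro j1 hj1 j2 hj2 hfeq
    simp only [Finset.coe_filter, Set.mem_setOf_eq, Finset.mem_univ, true_and] at hj1 hj2
    dsimp only at hfeq
    by_cases h1 : x j1.1 = y j1.1 <;> by_cases h2 : x j2.1 = y j2.1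
    · rw [if_pos h1, if_pos h2] at hfeq
      have k1 := key j1 hj1 h1
      have k2 := key j2 hj2 h2
      have hv : j1.1.1 - k = j2.1.1 - k := congrArg Fin.val hfeq
      exact Subtype.ext (Fin.ext (by omega))
    · rw [if_pos h1, if_neg h2] at hfeq
      have k1 := key j1 hj1 h1
      have hv : j1.1.1 - k = j2.1.1 := congrArg Fin.val hfeq
      have hD := j2.2
      exfalso
      omega
    · rw [if_neg h1, if_pos h2] at hfeq
      have k2 := key j2 hj2 h2
      have hv : j1.1.1 = j2.1.1 - k := congrArg Fin.val hfeq
      have hD := j1.2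
      exfalso
      omega
    · rw [if_neg h1, if_neg h2] at hfeq
      exact Subtype.ext hfeq

end Core

lemma Dcard {s k : ℕ} (hk0 : 0 < k) (hk : k ≤ s) (hk2 : s < 2 * k) :
    Fintype.card {i : Fin (s + k) // i.1 < s - k ∨ k ≤ i.1} = 2 * s - k := by
  classical
  rw [Fintype.card_subtype]
  have e1 : (Finset.univ.filter fun i : Fin (s + k) => i.1 < s - k ∨ k ≤ i.1).card
      = ((Finset.range (s + k)).filter fun m => m < s - k ∨ k ≤ m).card := by
    refine Finset.card_bij (fun i _ => i.1) ?_ ?_ ?_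
    · intro a ha
      simp only [Finset.mem_filter, Finset.mem_univ, true_and] at ha
      simp only [Finset.mem_filter, Finset.mem_range]
      exact ⟨a.2, ha⟩
    · intro a1 h1 a2 h2 h
      exact Fin.ext h
    · intro b hb
      simp only [Finset.mem_filter, Finset.mem_range] at hb
      exact ⟨⟨b, hb.1⟩, Finset.mem_filter.mpr ⟨Finset.mem_univ _, hb.2⟩, rfl⟩
  have e2 : ((Finset.range (s + k)).filter fun m => m < s - k ∨ k ≤ m)
      = Finset.range (s - k) ∪ Finset.Ico k (s + k) := by
    ext m
    simp only [Finset.mem_filter, Finset.mem_range, Finset.mem_union, Finset.mem_Ico]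
    omega
  have hdisj : Disjoint (Finset.range (s - k)) (Finset.Ico k (s + k)) := by
    rw [Finset.disjoint_left]
    intro m hm hm'
    simp only [Finset.mem_range] at hm
    simp only [Finset.mem_Ico] at hm'
    omega
  rw [e1, e2, Finset.card_union_of_disjoint hdisj, Finset.card_range, Nat.card_Ico]
  omega


/-- improved upper bound on the size of
`A_k = {x ∈ Σ^{s+k} : ∃ y, d_H(x,y) ≤ t and y has period k}` when `s/2 < k ≤ s`:
`|A_k| ≤ q^k · ∑_{i=0}^{t} C(2s-k,i)·(q-1)^i`. -/
theorem stmt13 {S : Type*} [Fintype S] [DecidableEq S]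
    (s t k q : ℕ) (hq : q = Fintype.card S)
    (hs : 0 < s) (ht : 0 < t) (hk0 : 0 < k) (hk : k ≤ s) (hk2 : s < 2 * k) :
    (Finset.univ.filter (fun x : Fin (s + k) → S =>
        ∃ y : Fin (s + k) → S, hammingDist x y ≤ t ∧
          ∀ i, (hi : i < s) → y ⟨i, by omega⟩ = y ⟨k + i, by omega⟩)).card ≤
      q ^ k * ∑ i ∈ Finset.range (t + 1), Nat.choose (2 * s - k) i * (q - 1) ^ i := by
  classical
  by_cases hS : Nonempty S
  swap
  · haveI : IsEmpty S := not_nonempty_iff.mp hS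
    haveI : IsEmpty (Fin (s + k) → S) := ⟨fun f => IsEmpty.false (f ⟨0, by omega⟩)⟩
    rw [Finset.univ_eq_empty, Finset.filter_empty, Finset.card_empty]
    exact Nat.zero_le _
  haveI : Inhabited S := Classical.inhabited_of_nonempty hS
  set T : Finset (Σ _z : Fin k → S, ({i : Fin (s + k) // i.1 < s - k ∨ k ≤ i.1} → S)) :=
    Finset.univ.sigma (fun z => Finset.univ.filter
      fun w : {i : Fin (s + k) // i.1 < s - k ∨ k ≤ i.1} → S =>
        hammingDist w (fun j => z ⟨j.1.1 % k, Nat.mod_lt _ hk0⟩) ≤ t) with hT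
  have hcardT : T.card ≤
      q ^ k * ∑ i ∈ Finset.range (t + 1), Nat.choose (2 * s - k) i * (q - 1) ^ i := by
    rw [hT, Finset.card_sigma]
    have hball : ∀ z : Fin k → S,
        (Finset.univ.filter fun w : {i : Fin (s + k) // i.1 < s - k ∨ k ≤ i.1} → S =>
          hammingDist w (fun j => z ⟨j.1.1 % k, Nat.mod_lt _ hk0⟩) ≤ t).card ≤
        ∑ i ∈ Finset.range (t + 1), Nat.choose (2 * s - k) i * (q - 1) ^ i := by
      intro z
      have h := ball_card_le (fun j : {i : Fin (s + k) // i.1 < s - k ∨ k ≤ i.1} =>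
        z ⟨j.1.1 % k, Nat.mod_lt _ hk0⟩) t
      rwa [Dcard hk0 hk hk2, ← hq] at h
    calc ∑ z : Fin k → S,
          (Finset.univ.filter fun w : {i : Fin (s + k) // i.1 < s - k ∨ k ≤ i.1} → S =>
            hammingDist w (fun j => z ⟨j.1.1 % k, Nat.mod_lt _ hk0⟩) ≤ t).card
        ≤ ∑ _z : Fin k → S,
            ∑ i ∈ Finset.range (t + 1), Nat.choose (2 * s - k) i * (q - 1) ^ i :=
          Finset.sum_le_sum (fun z _ => hball z)
      _ = q ^ k * ∑ i ∈ Finset.range (t + 1), Nat.choose (2 * s - k) i * (q - 1) ^ i := by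
          rw [Finset.sum_const, Finset.card_univ, Fintype.card_fun, Fintype.card_fin,
            ← hq, smul_eq_mul]
  refine le_trans ?_ hcardT
  apply Finset.card_le_card_of_injOn
    (fun x : Fin (s + k) → S =>
      if h : ∃ y : Fin (s + k) → S, hammingDist x y ≤ t ∧
          ∀ i, (hi : i < s) → y ⟨i, by omega⟩ = y ⟨k + i, by omega⟩ then
        (⟨fun m : Fin k => yp s k hk0 x h.choose ⟨m.1, by omega⟩, fun j => x j.1⟩ :
          Σ _z : Fin k → S, ({i : Fin (s + k) // i.1 < s - k ∨ k ≤ i.1} → S))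
      else ⟨fun _ => default, fun _ => default⟩)
  · intro x hx
    have hx' := (Finset.mem_filter.mp hx).2
    simp only [Finset.mem_coe]
    rw [dif_pos hx']
    obtain ⟨hd, hper⟩ := hx'.choose_spec
    rw [hT, Finset.mem_sigma]
    refine ⟨Finset.mem_univ _, Finset.mem_filter.mpr ⟨Finset.mem_univ _, ?_⟩⟩
    have hcert : (fun j : {i : Fin (s + k) // i.1 < s - k ∨ k ≤ i.1} =>
        (fun m : Fin k => yp s k hk0 x hx'.choose ⟨m.1, by omega⟩)
          ⟨j.1.1 % k, Nat.mod_lt _ hk0⟩)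
        = fun j : {i : Fin (s + k) // i.1 < s - k ∨ k ≤ i.1} =>
            yp s k hk0 x hx'.choose j.1 := by
      funext j
      exact (yp_period s k hk0 x hx'.choose j.1).symm
    show hammingDist (fun j : {i : Fin (s + k) // i.1 < s - k ∨ k ≤ i.1} => x j.1) _ ≤ t
    rw [hcert]
    exact core_bound hs hk0 hk hk2 x hx'.choose hd hper
  · intro x1 hx1 x2 hx2 hfeq
    simp only [Finset.coe_filter, Set.mem_setOf_eq, Finset.mem_univ, true_and] at hx1 hx2
    dsimp only at hfeq
    rw [dif_pos hx1, dif_pos hx2] at hfeq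
    have h1 := congrArg Sigma.fst hfeq
    have h2' : (fun j : {i : Fin (s + k) // i.1 < s - k ∨ k ≤ i.1} => x1 j.1)
        = (fun j : {i : Fin (s + k) // i.1 < s - k ∨ k ≤ i.1} => x2 j.1) :=
      congrArg (fun p : (Σ _z : Fin k → S,
        ({i : Fin (s + k) // i.1 < s - k ∨ k ≤ i.1} → S)) => p.2) hfeq
    dsimp only at h1
    funext i
    by_cases hD : i.1 < s - k ∨ k ≤ i.1
    · exact congrFun h2' ⟨i, hD⟩
    · push_neg at hD
      have h3 := congrFun h1 ⟨i.1, by omega⟩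
      have e1 : yp s k hk0 x1 hx1.choose ⟨i.1, by omega⟩ = x1 i :=
        yp_eq_x s k hk0 x1 hx1.choose ⟨i.1, by omega⟩ hD.1 hD.2
      have e2 : yp s k hk0 x2 hx2.choose ⟨i.1, by omega⟩ = x2 i :=
        yp_eq_x s k hk0 x2 hx2.choose ⟨i.1, by omega⟩ hD.1 hD.2
      exact e1.symm.trans (h3.trans e2)
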